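/- The set of X ∈ ℚ for which there exist p, q ∈ ℚ with (p² + 3q²)² = X⁴ + 3 is infinite. -/

import Mathlib

private def stepE (p : ℚ × ℚ) : ℚ × ℚ :=
  (((p.1 ^ 2 + 12) / (2 * p.2)) ^ 2,
    ((3 * p.1 ^ 2 - 12) / (2 * p.2)) * (p.1 - ((p.1 ^ 2 + 12) / (2 * p.2)) ^ 2) - p.2)

private def Pt : ℕ → ℚ × ℚ
  | 0 => (49/4, 329/8)
  | n + 1 => stepE (Pt n)

private lemma odd_nz {a : ℤ} (h : Odd a) : a ≠ 0 := by
  rintro rfl; exact (Int.not_odd_iff_even.mpr ⟨0, by norm_num⟩) h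

private lemma odd_nzQ {a : ℤ} (h : Odd a) : (a : ℚ) ≠ 0 :=
  Int.cast_ne_zero.mpr (odd_nz h)

private lemma inv (n : ℕ) :
    (Pt n).2 ^ 2 = (Pt n).1 ^ 3 - 12 * (Pt n).1 ∧
    (∃ w : ℚ, w ≠ 0 ∧ (Pt n).1 = w ^ 2) ∧
    (∃ a b c d : ℤ, Odd a ∧ Odd b ∧ Odd c ∧ Odd d ∧
      (Pt n).1 = (a : ℚ) / (b * 2 ^ (2 * n + 2)) ∧
      (Pt n).2 = (c : ℚ) / (d * 2 ^ (3 * n + 3))) := by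
  induction n with
  | zero =>
    refine ⟨by norm_num [Pt], ⟨7/2, by norm_num, by norm_num [Pt]⟩,
      ⟨49, 1, 329, 1, ⟨24, by ring⟩, ⟨0, by ring⟩, ⟨164, by ring⟩, ⟨0, by ring⟩,
        by norm_num [Pt], by norm_num [Pt]⟩⟩
  | succ n ih =>
    obtain ⟨hv, ⟨w, hw0, hwu⟩, a, b, c, d, oa, ob, oc, od, hu, hvr⟩ := ih
    set u := (Pt n).1 with hudef
    set v := (Pt n).2 with hvdef
    have hbQ : (b : ℚ) ≠ 0 := odd_nzQ ob
    have hcQ : (c : ℚ) ≠ 0 := odd_nzQ oc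
    have hdQ : (d : ℚ) ≠ 0 := odd_nzQ od
    have hvne : v ≠ 0 := by
      rw [hvr]
      exact div_ne_zero hcQ (by positivity)
    have hP1 : (Pt (n+1)).1 = ((u ^ 2 + 12) / (2 * v)) ^ 2 := rfl
    have hP2 : (Pt (n+1)).2 =
        ((3 * u ^ 2 - 12) / (2 * v)) * (u - ((u ^ 2 + 12) / (2 * v)) ^ 2) - v := rfl
    have hs : 2 * ((3 * u ^ 2 - 12) / (2 * v)) * v = 3 * u ^ 2 - 12 := by
      field_simp
    have hu' : (Pt (n+1)).1 = ((3 * u ^ 2 - 12) / (2 * v)) ^ 2 - 2 * u := by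
      rw [hP1]
      field_simp
      linear_combination (8 * u) * hv
    -- curve equation
    have hcurve : (Pt (n+1)).2 ^ 2 = (Pt (n+1)).1 ^ 3 - 12 * (Pt (n+1)).1 := by
      have hX : ((u ^ 2 + 12) / (2 * v)) ^ 2
          = ((3 * u ^ 2 - 12) / (2 * v)) ^ 2 - 2 * u := hP1.symm.trans hu'
      rw [hP2, hX, hu']
      linear_combination hv + ((((3 * u ^ 2 - 12) / (2 * v))) ^ 2 - 3 * u) * hs
    have hsq : ∃ w' : ℚ, w' ≠ 0 ∧ (Pt (n+1)).1 = w' ^ 2 := by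
      refine ⟨(u ^ 2 + 12) / (2 * v), div_ne_zero (by positivity) (by simpa using hvne), hP1⟩
    refine ⟨hcurve, hsq, ?_⟩
    have oa₁ : Odd (a ^ 2 + 3 * b ^ 2 * 2 ^ (4 * n + 6)) :=
      (oa.pow).add_even ⟨3 * b ^ 2 * 2 ^ (4 * n + 5), by ring⟩
    have o3 : Odd (3 : ℤ) := ⟨1, by norm_num⟩
    have oe : Odd (3 * a ^ 2 - 3 * b ^ 2 * 2 ^ (4 * n + 6)) :=
      (o3.mul oa.pow).sub_even ⟨3 * b ^ 2 * 2 ^ (4 * n + 5), by ring⟩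
    have og : Odd (4 * a * b ^ 3 * c ^ 2 - (a ^ 2 + 3 * b ^ 2 * 2 ^ (4 * n + 6)) ^ 2 * d ^ 2) :=
      Even.sub_odd ⟨2 * a * b ^ 3 * c ^ 2, by ring⟩ (oa₁.pow.mul od.pow)
    refine ⟨(a ^ 2 + 3 * b ^ 2 * 2 ^ (4 * n + 6)) ^ 2 * d ^ 2, b ^ 4 * c ^ 2,
      (3 * a ^ 2 - 3 * b ^ 2 * 2 ^ (4 * n + 6)) * d ^ 2 *
        (4 * a * b ^ 3 * c ^ 2 - (a ^ 2 + 3 * b ^ 2 * 2 ^ (4 * n + 6)) ^ 2 * d ^ 2)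
        - 8 * b ^ 6 * c ^ 4,
      b ^ 6 * c ^ 3 * d,
      oa₁.pow.mul od.pow, (ob.pow).mul oc.pow,
      ((oe.mul od.pow).mul og).sub_even ⟨4 * b ^ 6 * c ^ 4, by ring⟩,
      ((ob.pow).mul oc.pow).mul od, ?_, ?_⟩
    · rw [hP1, hu, hvr]
      push_cast
      field_simp
      ring
    · rw [hP2, hu, hvr]
      push_cast
      field_simp
      ring

private lemma rep (n : ℕ) : ∃ e f : ℤ, Odd e ∧ Odd f ∧
    (Pt n).2 / (2 * (Pt n).1) = (e : ℚ) / (f * 2 ^ (n + 2)) := by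
  obtain ⟨hv, ⟨w, hw0, hwu⟩, a, b, c, d, oa, ob, oc, od, hu, hvr⟩ := inv n
  refine ⟨c * b, d * a, oc.mul ob, od.mul oa, ?_⟩
  rw [hu, hvr]
  have haQ : (a : ℚ) ≠ 0 := odd_nzQ oa
  have hbQ : (b : ℚ) ≠ 0 := odd_nzQ ob
  have hdQ : (d : ℚ) ≠ 0 := odd_nzQ od
  push_cast
  field_simp
  ring

private lemma mem_lem (n : ℕ) :
    ∃ p q : ℚ, (p ^ 2 + 3 * q ^ 2) ^ 2 = ((Pt n).2 / (2 * (Pt n).1)) ^ 4 + 3 := by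
  obtain ⟨hv, ⟨w, hw0, hwu⟩, _⟩ := inv n
  refine ⟨w / 2, 1 / w, ?_⟩
  rw [hwu] at hv ⊢
  field_simp
  linear_combination (-((Pt n).2 ^ 2 + w ^ 6 - 12 * w ^ 2)) * hv

theorem stmt_4 :
    {x : ℚ | ∃ p q : ℚ, (p ^ 2 + 3 * q ^ 2) ^ 2 = x ^ 4 + 3}.Infinite := by
  apply Set.infinite_of_injective_forall_mem
    (f := fun n : ℕ => (Pt n).2 / (2 * (Pt n).1))
  case hi =>
    intro n m hnm
    obtain ⟨e1, f1, oe1, of1, h1⟩ := rep n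
    obtain ⟨e2, f2, oe2, of2, h2⟩ := rep m
    simp only [h1, h2] at hnm
    have hne1 : ((f1 : ℚ) * 2 ^ (n + 2)) ≠ 0 := by
      have := odd_nzQ of1; positivity
    have hne2 : ((f2 : ℚ) * 2 ^ (m + 2)) ≠ 0 := by
      have := odd_nzQ of2; positivity
    have heqQ : (e1 : ℚ) * (f2 * 2 ^ (m + 2)) = e2 * (f1 * 2 ^ (n + 2)) :=
      (div_eq_div_iff hne1 hne2).mp hnm
    have heq : e1 * (f2 * 2 ^ (m + 2)) = e2 * (f1 * 2 ^ (n + 2)) := by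
      exact_mod_cast heqQ
    by_contra hne
    have key : ∀ (n m : ℕ) (e1 f1 e2 f2 : ℤ), n < m → Odd e1 → Odd f1 → Odd e2 → Odd f2 →
        e1 * (f2 * 2 ^ (m + 2)) = e2 * (f1 * 2 ^ (n + 2)) → False := by
      intro n m e1 f1 e2 f2 hn oe1 of1 oe2 of2 heq
      obtain ⟨k, rfl⟩ : ∃ k, m = n + k + 1 := ⟨m - n - 1, by omega⟩
      have hc : (2 : ℤ) ^ (n + 2) ≠ 0 := by positivity
      have hx : (e1 * f2 * (2 * 2 ^ k)) * 2 ^ (n + 2) = (e2 * f1) * 2 ^ (n + 2) := by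
        linear_combination heq
      have hy : e1 * f2 * (2 * 2 ^ k) = e2 * f1 := mul_right_cancel₀ hc hx
      have hodd : Odd (e1 * f2 * (2 * 2 ^ k)) := by rw [hy]; exact oe2.mul of1
      exact (Int.not_odd_iff_even.mpr ⟨e1 * f2 * 2 ^ k, by ring⟩) hodd
    rcases Nat.lt_or_ge n m with h | h
    · exact key n m e1 f1 e2 f2 h oe1 of1 oe2 of2 heq
    · have h' : m < n := lt_of_le_of_ne h (by omega)
      exact key m n e2 f2 e1 f1 h' oe2 of2 oe1 of1 heq.symm
  case hf =>
    intro n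
    exact mem_lem n
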